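/- The nonabelian group of order p^3 and exponent p^2 (p odd) is incapable: there is no group H with H/Z(H) isomorphic to it. -/

import Mathlib

section auxstuff

lemma conj_pow_basic {G : Type*} [Group G] (g x : G) (n : ℕ) :
    g⁻¹ * x ^ n * g = (g⁻¹ * x * g) ^ n := by
  induction n with
  | zero => simp
  | succ n ih => rw [pow_succ, pow_succ, ← ih]; group

lemma conj_pow_aux {G : Type*} [Group G] {A B z : G} {j : ℕ}
    (hz : ∀ g : G, z * g = g * z) (h : B⁻¹ * A * B = A ^ j * z) (n : ℕ) :
    (B ^ n)⁻¹ * A * B ^ n = A ^ (j ^ n) * z ^ (∑ k ∈ Finset.range n, j ^ k) := by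
  induction n with
  | zero => simp
  | succ n ih =>
    have e1 : (B ^ (n+1))⁻¹ * A * B ^ (n+1) = B⁻¹ * ((B ^ n)⁻¹ * A * B ^ n) * B := by
      rw [pow_succ]; group
    have hBz : B⁻¹ * z * B = z := by rw [← hz B⁻¹]; group
    have hcz : Commute (A ^ j) z := (hz (A ^ j)).symm
    rw [e1, ih]
    have e2 : B⁻¹ * (A ^ j ^ n * z ^ (∑ k ∈ Finset.range n, j ^ k)) * B
        = (B⁻¹ * A * B) ^ j ^ n * (B⁻¹ * z * B) ^ (∑ k ∈ Finset.range n, j ^ k) := by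
      rw [← conj_pow_basic, ← conj_pow_basic]; group
    rw [e2, hBz, h, hcz.mul_pow, ← pow_mul, Finset.sum_range_succ, pow_add, mul_assoc,
      ← pow_add z, Nat.add_comm (j ^ n), pow_one, Nat.mul_comm j]

lemma geom_id_aux (t : ℕ) : ∀ n : ℕ, (1 + t) ^ n = 1 + t * ∑ k ∈ Finset.range n, (1 + t) ^ k
  | 0 => by simp
  | n + 1 => by rw [Finset.sum_range_succ, pow_succ, geom_id_aux t n]; ring

lemma subgroup_top_of_lt {p : ℕ} (hp : p.Prime) {K : Type*} [Group K] [Finite K]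
    (hcard : Nat.card K = p ^ 3) {S T : Subgroup K} (hle : S < T)
    (hS : Nat.card S = p ^ 2) : T = ⊤ := by
  apply Subgroup.eq_top_of_card_eq
  have h1 : p ^ 2 ∣ Nat.card T := hS ▸ Subgroup.card_dvd_of_le hle.le
  have h2 : Nat.card T ∣ p ^ 3 := hcard ▸ Subgroup.card_subgroup_dvd_card T
  have h3 : Nat.card T ≠ p ^ 2 := fun h =>
    hle.ne (Subgroup.eq_of_le_of_card_ge hle.le (le_of_eq (h.trans hS.symm)))
  rw [hcard]
  obtain ⟨k, hk, hkeq⟩ := (Nat.dvd_prime_pow hp).mp h2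
  have h4 : 2 ≤ k := (Nat.pow_dvd_pow_iff_le_right hp.one_lt).mp (hkeq ▸ h1)
  have hk2 : k ≠ 2 := fun h => h3 (by rw [hkeq, h])
  have : k = 3 := by omega
  rw [hkeq, this]

lemma geom_sum_aux {p : ℕ} (hodd : Odd p) (m : ℕ) :
    ∃ w : ℕ, ∑ k ∈ Finset.range p, (1 + p * m) ^ k = p + p ^ 2 * w := by
  set E := ∑ k ∈ Finset.range p, (1 + p * m) ^ k with hE
  have hEge : p ≤ E := by
    have := Finset.card_nsmul_le_sum (Finset.range p) (fun k => (1 + p * m) ^ k) 1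
      (fun k _ => Nat.one_le_pow _ _ (by positivity))
    simpa using this
  have hdvd : p ∣ ∑ k ∈ Finset.range p, k := by
    obtain ⟨e, he⟩ := hodd
    have h2 := Finset.sum_range_id_mul_two p
    refine ⟨e, ?_⟩
    have h3 : (∑ k ∈ Finset.range p, k) * 2 = (p * e) * 2 := by
      rw [h2, show p - 1 = 2 * e by omega]; ring
    exact Nat.eq_of_mul_eq_mul_right two_pos h3
  have hcast : ((E : ℕ) : ZMod (p ^ 2)) = ((p : ℕ) : ZMod (p ^ 2)) := by
    push_cast [hE]
    set c : ZMod (p ^ 2) := (p : ZMod (p ^ 2)) * (m : ZMod (p ^ 2)) with hc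
    have hc2 : c * c = 0 := by
      have : ((p ^ 2 : ℕ) : ZMod (p ^ 2)) = 0 := ZMod.natCast_self _
      push_cast at this
      rw [hc]; ring_nf
      calc (p : ZMod (p^2)) ^ 2 * (m : ZMod (p^2)) ^ 2 = 0 * (m : ZMod (p^2)) ^ 2 := by rw [this]
        _ = 0 := by ring
    have hpow : ∀ k : ℕ, (1 + c) ^ k = 1 + (k : ZMod (p ^ 2)) * c := by
      intro k
      induction k with
      | zero => simp
      | succ k ih =>
        calc (1 + c) ^ (k + 1) = (1 + c) ^ k * (1 + c) := pow_succ _ _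
          _ = (1 + (k : ZMod (p^2)) * c) * (1 + c) := by rw [ih]
          _ = 1 + ((k : ZMod (p^2)) + 1) * c + (k : ZMod (p^2)) * (c * c) := by ring
          _ = 1 + ((k + 1 : ℕ) : ZMod (p^2)) * c := by rw [hc2]; push_cast; ring
    calc ∑ k ∈ Finset.range p, ((1 : ZMod (p^2)) + (p : ZMod (p^2)) * m) ^ k
        = ∑ k ∈ Finset.range p, (1 + (k : ZMod (p^2)) * c) := by
          refine Finset.sum_congr rfl fun k _ => ?_
          rw [← hpow k, hc]
      _ = (p : ZMod (p^2)) + (↑(∑ k ∈ Finset.range p, k)) * c := by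
          rw [Finset.sum_add_distrib, Finset.sum_const, Finset.card_range]
          push_cast
          rw [Finset.sum_mul]
          simp
      _ = (p : ZMod (p^2)) := by
          obtain ⟨e, he⟩ := hdvd
          rw [he, hc]
          push_cast
          have : ((p ^ 2 : ℕ) : ZMod (p ^ 2)) = 0 := ZMod.natCast_self _
          push_cast at this
          calc (p : ZMod (p^2)) + (p : ZMod (p^2)) * e * ((p:ZMod (p^2)) * m)
              = (p : ZMod (p^2)) + (p:ZMod (p^2))^2 * (e * m) := by ring
            _ = (p : ZMod (p^2)) := by rw [this]; ring
  have hmod : E ≡ p [MOD p ^ 2] := (ZMod.natCast_eq_natCast_iff _ _ _).mp hcast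
  have hdv : p ^ 2 ∣ E - p := (Nat.modEq_iff_dvd' hEge).mp hmod.symm
  obtain ⟨w, hw⟩ := hdv
  exact ⟨w, by omega⟩

end auxstuff

/-- For `p` an odd prime, the nonabelian group of order `p^3` and exponent `p^2` is
incapable: there is no group `H` with `H/Z(H)` isomorphic to it. -/
theorem stmt11 (p : ℕ) [Fact p.Prime] (hodd : Odd p) (K : Type) [Group K] [Finite K]
    (hcard : Nat.card K = p ^ 3) (hexp : Monoid.exponent K = p ^ 2)
    (hnab : ¬ ∀ a b : K, a * b = b * a) :
    ¬ ∃ (H : Type) (_ : Group H), Nonempty ((H ⧸ Subgroup.center H) ≃* K) := by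
  have hp : p.Prime := Fact.out
  have hp1 : 1 < p := hp.one_lt
  rintro ⟨H, _, ⟨φ⟩⟩
  -- K-side setup
  obtain ⟨a, ha⟩ : ∃ a : K, orderOf a = p ^ 2 := by
    by_contra hcon
    push_neg at hcon
    have hall : ∀ x : K, x ^ p = 1 := by
      intro x
      have h1 : orderOf x ∣ p ^ 2 := hexp ▸ Monoid.order_dvd_exponent x
      obtain ⟨k, hk, hke⟩ := (Nat.dvd_prime_pow hp).mp h1
      have hk2 : k ≠ 2 := fun h => hcon x (by rw [hke, h])
      have hk1 : k ≤ 1 := by omega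
      exact orderOf_dvd_iff_pow_eq_one.mp (hke ▸ (Nat.pow_dvd_pow p hk1).trans (by rw [pow_one]))
    have h2 : Monoid.exponent K ∣ p := Monoid.exponent_dvd_of_forall_pow_eq_one hall
    rw [hexp] at h2
    have := Nat.le_of_dvd hp.pos h2
    nlinarith
  set Za := Subgroup.zpowers a with hZadef
  have hcardZa : Nat.card Za = p ^ 2 := by rw [hZadef, Nat.card_zpowers, ha]
  have hZane : Za ≠ ⊤ := by
    intro h
    have : Nat.card Za = Nat.card K := by
      rw [h]; exact Nat.card_congr Subgroup.topEquiv.toEquiv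
    rw [hcardZa, hcard] at this
    exact absurd (Nat.pow_right_injective hp.two_le this) (by omega)
  obtain ⟨b, hb⟩ : ∃ b : K, b ∉ Za := by
    by_contra hcon
    push_neg at hcon
    exact hZane ((Subgroup.eq_top_iff' Za).mpr hcon)
  -- Za is normal
  have hpg : IsPGroup p K := IsPGroup.of_card hcard
  haveI := hpg.isNilpotent
  have hnc : NormalizerCondition K := normalizerCondition_of_isNilpotent
  have hZaN : Za.Normal := by
    have hlt : Za < Subgroup.normalizer (Za : Set K) := hnc Za (lt_top_iff_ne_top.mpr hZane)
    have htop : Subgroup.normalizer (Za : Set K) = ⊤ := subgroup_top_of_lt hp hcard hlt hcardZa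
    exact Subgroup.normalizer_eq_top_iff.mp htop
  -- index of Za is p
  have hidx : Za.index = p := by
    have h1 := Subgroup.card_mul_index Za
    rw [hcardZa, hcard] at h1
    have hp2 : 0 < p ^ 2 := by positivity
    apply Nat.eq_of_mul_eq_mul_left hp2
    rw [h1]; ring
  -- b ^ p ∈ Za
  have hbp : b ^ p ∈ Za := by
    have hq : Nat.card (K ⧸ Za) = p := by rw [← Subgroup.index_eq_card, hidx]
    have h1 : ((b : K ⧸ Za) : K ⧸ Za) ^ p = 1 := by
      rw [← hq]; exact pow_card_eq_one'
    rw [← QuotientGroup.mk_pow] at h1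
    exact (QuotientGroup.eq_one_iff _).mp h1
  -- natural number exponents for elements of Za
  have hmem_pow : ∀ x : K, x ∈ Za → ∃ n : ℕ, a ^ n = x := by
    intro x hx
    obtain ⟨k, hk⟩ := Subgroup.mem_zpowers_iff.mp hx
    refine ⟨(k % ((p ^ 2 : ℕ) : ℤ)).toNat, ?_⟩
    have hnn : (0 : ℤ) ≤ k % ((p ^ 2 : ℕ) : ℤ) :=
      Int.emod_nonneg k (by positivity)
    have h1 : a ^ ((k % ((p ^ 2 : ℕ) : ℤ)).toNat : ℤ) = a ^ k := by
      rw [Int.toNat_of_nonneg hnn, ← ha, zpow_mod_orderOf]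
    rw [← zpow_natCast, h1, hk]
  have hconjmem : b⁻¹ * a * b ∈ Za := by
    have := hZaN.conj_mem a (Subgroup.mem_zpowers a) b⁻¹
    simpa using this
  obtain ⟨j, hj⟩ := hmem_pow _ hconjmem
  obtain ⟨s, hs⟩ := hmem_pow _ hbp
  -- conjugation powers in K
  have hKconj : (b ^ p)⁻¹ * a * (b ^ p) = a ^ (j ^ p) := by
    have h0 : b⁻¹ * a * b = a ^ j * (1 : K) := by rw [mul_one, hj]
    have := conj_pow_aux (fun g => by simp) h0 p
    simpa using this
  have hfix : a ^ (j ^ p) = a := by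
    rw [← hKconj, ← hs]
    have hcomm : Commute a (a ^ s) := (Commute.refl a).pow_right s
    rw [mul_assoc, hcomm.eq, inv_mul_cancel_left]
  have hane : a ≠ 1 := by
    intro h
    rw [h, orderOf_one] at ha
    nlinarith
  have hj1 : 1 ≤ j := by
    rcases Nat.eq_zero_or_pos j with h | h
    · exfalso
      rw [h, pow_zero] at hj
      apply hane
      have : b⁻¹ * a * b = 1 := hj.symm
      calc a = b * (b⁻¹ * a * b) * b⁻¹ := by group
        _ = 1 := by rw [this]; group
    · exact h
  have hjp1 : 1 ≤ j ^ p := Nat.one_le_pow _ _ hj1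
  have hdvd2 : p ^ 2 ∣ j ^ p - 1 := by
    rw [← ha]
    apply orderOf_dvd_of_pow_eq_one
    have : a ^ (j ^ p) = a ^ (j ^ p - 1) * a := by
      rw [← pow_succ, Nat.sub_add_cancel hjp1]
    rw [this] at hfix
    exact mul_right_cancel (by rw [hfix, one_mul])
  -- j ≡ 1 mod p
  have hjmod : j ≡ 1 [MOD p] := by
    have h0 : ((j ^ p - 1 : ℕ) : ZMod p) = 0 := by
      rw [ZMod.natCast_eq_zero_iff]
      exact dvd_trans (dvd_pow_self p two_ne_zero) hdvd2
    rw [Nat.cast_sub hjp1] at h0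
    push_cast at h0
    have h1 : (j : ZMod p) ^ p = 1 := by linear_combination h0
    have h2 : (j : ZMod p) = 1 := by rw [← ZMod.pow_card (j : ZMod p), h1]
    have h3 : ((j : ℕ) : ZMod p) = ((1 : ℕ) : ZMod p) := by rw [h2]; simp
    exact (ZMod.natCast_eq_natCast_iff _ _ _).mp h3
  obtain ⟨m, hm⟩ : p ∣ j - 1 := (Nat.modEq_iff_dvd' hj1).mp hjmod.symm
  have hjm : j = 1 + p * m := by omega
  subst hjm
  -- H side
  set π : H →* K := φ.toMonoidHom.comp (QuotientGroup.mk' (Subgroup.center H)) with hπdef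
  have hπs : Function.Surjective π := φ.surjective.comp (QuotientGroup.mk'_surjective _)
  have hker : ∀ h : H, π h = 1 ↔ h ∈ Subgroup.center H := by
    intro h
    constructor
    · intro hh
      have h1 : (QuotientGroup.mk' (Subgroup.center H)) h = 1 := by
        apply φ.injective
        simpa [hπdef] using hh
      exact (QuotientGroup.eq_one_iff h).mp h1
    · intro hh
      have h1 : (QuotientGroup.mk' (Subgroup.center H)) h = 1 :=
        (QuotientGroup.eq_one_iff h).mpr hh
      calc π h = φ ((QuotientGroup.mk' (Subgroup.center H)) h) := rfl
        _ = 1 := by rw [h1, map_one]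
  have hkersub : π.ker = Subgroup.center H := by
    ext x; rw [MonoidHom.mem_ker]; exact hker x
  obtain ⟨A, hA⟩ := hπs a
  obtain ⟨B, hB⟩ := hπs b
  -- central elements
  set z : H := (A ^ (1 + p * m))⁻¹ * (B⁻¹ * A * B) with hzdef
  have hzc : z ∈ Subgroup.center H := by
    apply (hker z).mp
    have h0 : π z = (a ^ (1 + p * m))⁻¹ * (b⁻¹ * a * b) := by
      simp [hzdef, map_mul, map_inv, map_pow, hA, hB]
    rw [h0, ← hj, inv_mul_cancel]
  have hzcomm : ∀ g : H, z * g = g * z := fun g => (Subgroup.mem_center_iff.mp hzc g).symm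
  have hzeq : B⁻¹ * A * B = A ^ (1 + p * m) * z := by rw [hzdef]; group
  set z2 : H := (A ^ s)⁻¹ * B ^ p with hz2def
  have hz2c : z2 ∈ Subgroup.center H := by
    apply (hker z2).mp
    have h0 : π z2 = (a ^ s)⁻¹ * b ^ p := by
      simp [hz2def, map_mul, map_inv, map_pow, hA, hB]
    rw [h0, ← hs, inv_mul_cancel]
  have hz2comm : ∀ g : H, g * z2 = z2 * g := fun g => Subgroup.mem_center_iff.mp hz2c g
  have hBp : B ^ p = A ^ s * z2 := by rw [hz2def]; group
  have hApc : A ^ (p ^ 2) ∈ Subgroup.center H := by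
    apply (hker _).mp
    have h0 : π (A ^ (p ^ 2)) = a ^ (p ^ 2) := by simp [map_pow, hA]
    rw [h0, ← ha, pow_orderOf_eq_one]
  obtain ⟨w, hw⟩ := geom_sum_aux hodd m
  set E := ∑ k ∈ Finset.range p, (1 + p * m) ^ k with hEdef
  have hmain : A ^ ((1 + p * m) ^ p) * z ^ E = A := by
    rw [← conj_pow_aux hzcomm hzeq p, hBp]
    have hcA : Commute A (A ^ s * z2) := ((Commute.refl A).pow_right s).mul_right (hz2comm A)
    rw [mul_assoc, hcA.eq, inv_mul_cancel_left]
  set C : H := A ^ (p * m) * z with hCdef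
  have hCA : Commute A C := ((Commute.refl A).pow_right (p * m)).mul_right (hzcomm A).symm
  have hCE : C ^ E = 1 := by
    have hgeo : (1 + p * m) ^ p = 1 + (p * m) * E := geom_id_aux (p * m) p
    have hCz : Commute (A ^ (p * m)) z := (hzcomm (A ^ (p * m))).symm
    rw [hCdef, hCz.mul_pow]
    have h0 := hmain
    rw [hgeo, pow_add, pow_one, pow_mul, mul_assoc] at h0
    exact mul_left_cancel (a := A) (by rw [h0, mul_one])
  have hABC : B⁻¹ * A * B = A * C := by
    rw [hzeq, hCdef, pow_add, pow_one, mul_assoc]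
  have hconjA : ∀ n : ℕ, B⁻¹ * A ^ n * B = A ^ n * C ^ n := by
    intro n
    rw [conj_pow_basic, hABC, hCA.mul_pow]
  have hC2 : C ^ (p ^ 2) = 1 := by
    have h1 := hconjA (p ^ 2)
    have h2 : B⁻¹ * A ^ (p ^ 2) * B = A ^ (p ^ 2) := by
      have h3 := Subgroup.mem_center_iff.mp hApc B
      rw [mul_assoc, ← h3, inv_mul_cancel_left]
    rw [h2] at h1
    exact (left_eq_mul.mp h1)
  have hCp : C ^ p = 1 := by
    calc C ^ p = C ^ p * ((C ^ (p ^ 2)) ^ w) := by rw [hC2, one_pow, mul_one]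
      _ = C ^ (p + p ^ 2 * w) := by rw [pow_add, pow_mul]
      _ = C ^ E := by rw [← hw]
      _ = 1 := hCE
  have hCpm : C ^ (p * m) = 1 := by rw [pow_mul, hCp, one_pow]
  have hzBB : B⁻¹ * z * B = z := by rw [← hzcomm B⁻¹]; group
  have hCBc : B⁻¹ * C * B = C := by
    rw [hCdef]
    calc B⁻¹ * (A ^ (p * m) * z) * B
        = (B⁻¹ * A ^ (p * m) * B) * (B⁻¹ * z * B) := by group
      _ = (A ^ (p * m) * C ^ (p * m)) * z := by rw [hconjA, hzBB]
      _ = A ^ (p * m) * z := by rw [hCpm, mul_one]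
  have hCB : C * B = B * C := by
    calc C * B = B * (B⁻¹ * C * B) := by group
      _ = B * C := by rw [hCBc]
  -- closure of {a, b} is everything
  have hclosK : Subgroup.closure ({a, b} : Set K) = ⊤ := by
    have h1 : Za ≤ Subgroup.closure ({a, b} : Set K) := by
      rw [hZadef, Subgroup.zpowers_le]
      exact Subgroup.subset_closure (Set.mem_insert a _)
    have hle : Za < Subgroup.closure ({a, b} : Set K) := by
      refine lt_of_le_of_ne h1 fun h => hb ?_
      rw [h]
      exact Subgroup.subset_closure (Set.mem_insert_of_mem _ rfl)
    exact subgroup_top_of_lt hp hcard hle hcardZa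
  have htopH : Subgroup.closure ({A, B} : Set H) ⊔ π.ker = ⊤ := by
    have hmap : Subgroup.map π (Subgroup.closure ({A, B} : Set H)) = ⊤ := by
      rw [MonoidHom.map_closure]
      have himg : π '' {A, B} = {a, b} := by
        rw [Set.image_insert_eq, Set.image_singleton, hA, hB]
      rw [himg, hclosK]
    calc Subgroup.closure ({A, B} : Set H) ⊔ π.ker
        = Subgroup.comap π (Subgroup.map π (Subgroup.closure ({A, B} : Set H))) :=
          (Subgroup.comap_map_eq π _).symm
      _ = Subgroup.comap π ⊤ := by rw [hmap]
      _ = ⊤ := Subgroup.comap_top π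
  have hCcent : C ∈ Subgroup.center H := by
    have hsub : (⊤ : Subgroup H) ≤ Subgroup.centralizer {C} := by
      rw [← htopH]
      apply sup_le
      · rw [Subgroup.closure_le]
        rintro x hx
        simp only [Set.mem_insert_iff, Set.mem_singleton_iff] at hx
        rcases hx with rfl | rfl
        · exact Subgroup.mem_centralizer_iff.mpr fun u hu => by
            rw [Set.mem_singleton_iff] at hu; subst hu; exact hCA.symm.eq
        · exact Subgroup.mem_centralizer_iff.mpr fun u hu => by
            rw [Set.mem_singleton_iff] at hu; subst hu; exact hCB
      · rw [hkersub]
        intro g hg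
        exact Subgroup.mem_centralizer_iff.mpr fun u hu => by
          rw [Set.mem_singleton_iff] at hu; subst hu
          exact Subgroup.mem_center_iff.mp hg C
    rw [Subgroup.mem_center_iff]
    intro g
    have h0 := hsub (Subgroup.mem_top g)
    rw [Subgroup.mem_centralizer_iff] at h0
    exact (h0 C rfl).symm
  -- final contradiction
  have hπC : π C = 1 := (hker C).mpr hCcent
  have hπz : π z = 1 := (hker z).mpr hzc
  have hapm : a ^ (p * m) = 1 := by
    have h0 : π C = a ^ (p * m) * π z := by simp [hCdef, map_mul, map_pow, hA]
    rw [hπz, mul_one] at h0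
    rw [← h0, hπC]
  have hab : a * b = b * a := by
    have h1 : b⁻¹ * a * b = a := by
      rw [← hj, pow_add, pow_one, hapm, mul_one]
    calc a * b = b * (b⁻¹ * a * b) := by group
      _ = b * a := by rw [h1]
  apply hnab
  intro x y
  have hcent1 : (⊤ : Subgroup K) ≤ Subgroup.centralizer {a, b} := by
    rw [← hclosK, Subgroup.closure_le]
    rintro u hu
    simp only [Set.mem_insert_iff, Set.mem_singleton_iff] at hu
    rcases hu with rfl | rfl
    · exact Subgroup.mem_centralizer_iff.mpr fun v hv => by
        simp only [Set.mem_insert_iff, Set.mem_singleton_iff] at hv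
        rcases hv with rfl | rfl
        · rfl
        · exact hab.symm
    · exact Subgroup.mem_centralizer_iff.mpr fun v hv => by
        simp only [Set.mem_insert_iff, Set.mem_singleton_iff] at hv
        rcases hv with rfl | rfl
        · exact hab
        · rfl
  have hx := Subgroup.mem_centralizer_iff.mp (hcent1 (Subgroup.mem_top x))
  have hcent2 : (⊤ : Subgroup K) ≤ Subgroup.centralizer {x} := by
    rw [← hclosK, Subgroup.closure_le]
    rintro u hu
    simp only [Set.mem_insert_iff, Set.mem_singleton_iff] at hu
    apply Subgroup.mem_centralizer_iff.mpr
    intro v hv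
    rw [Set.mem_singleton_iff] at hv; subst hv
    rcases hu with rfl | rfl
    · exact (hx u (by simp)).symm
    · exact (hx u (by simp)).symm
  exact Subgroup.mem_centralizer_iff.mp (hcent2 (Subgroup.mem_top y)) x rfl
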